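/- Let p ∈ (1/2 - ε, (1-ε)/2) with 0 < ε < 1, q = p + ε, and let λ* ∈ [0,1] satisfy log(p/(p+ε))·p^{λ*}(p+ε)^{1-λ*} = log((1-p-ε)/(1-p))·(1-p)^{λ*}(1-p-ε)^{1-λ*} (the stationarity condition for the λ-Chernoff coefficient between Bernoulli(p) and Bernoulli(q)). Then λ* ≤ 1/2. -/

import Mathlib

open Real

lemma aux_log (u : ℝ) (hu : 0 ≤ u) : 2*u/(2+u) ≤ Real.log (1+u) := by
  set f : ℝ → ℝ := fun t => Real.log (1+t) - 2*t/(2+t) with hf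
  have key : ∀ x ∈ Set.Ici (0:ℝ), HasDerivAt f (1/(1+x) - (2*(2+x) - 2*x*1)/(2+x)^2) x := by
    intro x hx
    have hx0 : (0:ℝ) ≤ x := hx
    have h1 : HasDerivAt (fun t : ℝ => 1 + t) 1 x := (hasDerivAt_id x).const_add 1
    have h2 : HasDerivAt (fun t : ℝ => Real.log (1+t)) (1/(1+x)) x := by
      simpa using h1.log (by linarith)
    have h3 : HasDerivAt (fun t : ℝ => 2*t) 2 x := by
      simpa using (hasDerivAt_id x).const_mul 2
    have h4 : HasDerivAt (fun t : ℝ => 2+t) 1 x := (hasDerivAt_id x).const_add 2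
    exact h2.sub (h3.div h4 (by linarith))
  have hmono : MonotoneOn f (Set.Ici 0) := by
    apply monotoneOn_of_deriv_nonneg (convex_Ici 0)
    · exact fun x hx => ((key x hx).continuousAt).continuousWithinAt
    · intro x hx
      rw [interior_Ici] at hx
      exact ((key x (Set.mem_Ici.mpr (le_of_lt hx))).differentiableAt).differentiableWithinAt
    · intro x hx
      rw [interior_Ici] at hx
      have hx0 : (0:ℝ) < x := hx
      rw [(key x (le_of_lt hx0)).deriv]
      rw [div_sub_div _ _ (by positivity) (by positivity)]
      apply div_nonneg _ (by positivity)
      nlinarith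
  have h0 : f 0 ≤ f u := hmono (Set.mem_Ici.mpr (le_refl 0)) (Set.mem_Ici.mpr hu) hu
  simp [hf] at h0
  linarith

lemma aux_mono (ε : ℝ) (hε : 0 < ε) {x y : ℝ} (hx : 0 < x) (hxy : x ≤ y) :
    x*(x+ε)*(Real.log (x+ε) - Real.log x)^2 ≤ y*(y+ε)*(Real.log (y+ε) - Real.log y)^2 := by
  set f : ℝ → ℝ := fun t => t*(t+ε)*(Real.log (t+ε) - Real.log t)^2 with hf
  have key : ∀ t : ℝ, 0 < t → HasDerivAt f
      ((2*t+ε)*(Real.log (t+ε) - Real.log t)^2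
        + t*(t+ε)*(2*(Real.log (t+ε) - Real.log t)*(1/(t+ε) - 1/t))) t := by
    intro t ht
    have h1 : HasDerivAt (fun s : ℝ => s*(s+ε)) (2*t+ε) t := by
      have := (hasDerivAt_id t).mul ((hasDerivAt_id t).add_const ε)
      refine this.congr_deriv ?_
      simp only [id]; ring
    have h2' : HasDerivAt (fun s : ℝ => s + ε) 1 t := (hasDerivAt_id t).add_const ε
    have h2 : HasDerivAt (fun s : ℝ => Real.log (s+ε)) (1/(t+ε)) t := by
      simpa using h2'.log (by linarith)
    have h3 : HasDerivAt (fun s : ℝ => Real.log s) (1/t) t := by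
      simpa using Real.hasDerivAt_log (ne_of_gt ht)
    have h4 : HasDerivAt (fun s : ℝ => (Real.log (s+ε) - Real.log s)^2)
        (2*(Real.log (t+ε) - Real.log t)*(1/(t+ε) - 1/t)) t := by
      have := (h2.sub h3).pow 2
      refine this.congr_deriv ?_
      simp only [Pi.sub_apply]; ring
    exact h1.mul h4
  have hmono : MonotoneOn f (Set.Ioi 0) := by
    apply monotoneOn_of_deriv_nonneg (convex_Ioi 0)
    · exact fun t ht => ((key t ht).continuousAt).continuousWithinAt
    · intro t ht
      rw [interior_Ioi] at ht
      exact ((key t ht).differentiableAt).differentiableWithinAt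
    · intro t ht
      rw [interior_Ioi] at ht
      have ht0 : (0:ℝ) < t := ht
      rw [(key t ht0).deriv]
      set L := Real.log (t+ε) - Real.log t with hL'
      have hL : 2*ε/(2*t+ε) ≤ L := by
        have h := aux_log (ε/t) (by positivity)
        rw [show (1:ℝ) + ε/t = (t+ε)/t by field_simp, Real.log_div (by linarith) (ne_of_gt ht0)] at h
        have heq : 2*(ε/t)/(2+ε/t) = 2*ε/(2*t+ε) := by
          rw [div_eq_div_iff (by positivity) (by positivity)]; field_simp
        rw [heq] at h; exact h
      have hLpos : 0 < L := lt_of_lt_of_le (by positivity) hL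
      have h5 : 2*ε ≤ (2*t+ε)*L := by
        rw [div_le_iff₀ (by positivity)] at hL; linarith [hL]
      have hexpr : (2*t+ε)*L^2 + t*(t+ε)*(2*L*(1/(t+ε) - 1/t)) = L*((2*t+ε)*L - 2*ε) := by
        field_simp; ring
      rw [hexpr]
      exact mul_nonneg hLpos.le (by linarith)
  exact hmono (Set.mem_Ioi.mpr hx) (Set.mem_Ioi.mpr (lt_of_lt_of_le hx hxy)) hxy

theorem stationary_point_le_half (p ε l : ℝ) (hε0 : 0 < ε) (hε1 : ε < 1)
    (hp1 : 1/2 - ε < p) (hp2 : p < (1 - ε) / 2)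
    (hl0 : 0 ≤ l) (hl1 : l ≤ 1)
    (hstat : Real.log (p / (p + ε)) * p ^ l * (p + ε) ^ (1 - l)
      = Real.log ((1 - p - ε) / (1 - p)) * (1 - p) ^ l * (1 - p - ε) ^ (1 - l)) :
    l ≤ 1/2 := by
  have hq : (1:ℝ)/2 < p + ε := by linarith
  have hq0 : (0:ℝ) < p + ε := by linarith
  have h1p : (0:ℝ) < 1 - p := by linarith
  have h1q : (0:ℝ) < 1 - p - ε := by linarith
  have h1q1p : 1 - p - ε < 1 - p := by linarith
  -- RHS-related facts
  have hlogB : Real.log ((1 - p - ε) / (1 - p)) < 0 :=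
    Real.log_neg (by positivity) ((div_lt_one h1p).mpr h1q1p)
  rcases le_or_gt p 0 with hp | hp
  · -- degenerate case p ≤ 0 : stationarity cannot hold with l > 1/2
    by_contra hl
    push_neg at hl
    have hRHS : Real.log ((1 - p - ε) / (1 - p)) * (1 - p) ^ l * (1 - p - ε) ^ (1 - l) < 0 := by
      have h1 : (0:ℝ) < (1 - p) ^ l := Real.rpow_pos_of_pos h1p l
      have h2 : (0:ℝ) < (1 - p - ε) ^ (1 - l) := Real.rpow_pos_of_pos h1q (1 - l)
      have := mul_pos h1 h2
      nlinarith
    rcases eq_or_lt_of_le hp with hp0 | hp0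
    · -- p = 0
      subst hp0
      rw [Real.zero_rpow (by intro h; rw [h] at hl; norm_num at hl), mul_zero, zero_mul] at hstat
      linarith
    · -- p < 0
      have hlogA : Real.log (p / (p + ε)) < 0 := by
        rw [show p / (p+ε) = -(-p/(p+ε)) by ring, Real.log_neg_eq_log]
        exact Real.log_neg (div_pos (by linarith) hq0) ((div_lt_one hq0).mpr (by linarith))
      have hppow : p ^ l < 0 := by
        rw [Real.rpow_def_of_neg hp0]
        apply mul_neg_of_pos_of_neg (Real.exp_pos _)
        apply Real.cos_neg_of_pi_div_two_lt_of_lt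
        · nlinarith [Real.pi_pos]
        · nlinarith [Real.pi_pos]
      have hqpow : (0:ℝ) < (p + ε) ^ (1 - l) := Real.rpow_pos_of_pos hq0 (1 - l)
      have hLHS : 0 < Real.log (p / (p + ε)) * p ^ l * (p + ε) ^ (1 - l) :=
        mul_pos (mul_pos_of_neg_of_neg hlogA hppow) hqpow
      linarith
  · -- main case 0 < p
    have hple : p ≤ 1 - p - ε := by linarith
    set la := Real.log p with hla
    set lb := Real.log (p + ε) with hlb
    set lc := Real.log (1 - p) with hlc
    set ld := Real.log (1 - p - ε) with hld
    have hA : 0 < lb - la := sub_pos.mpr (Real.log_lt_log hp (by linarith))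
    have hB : 0 < lc - ld := sub_pos.mpr (Real.log_lt_log h1q h1q1p)
    have hP : (0:ℝ) < p ^ l * (p + ε) ^ (1 - l) :=
      mul_pos (Real.rpow_pos_of_pos hp l) (Real.rpow_pos_of_pos hq0 (1 - l))
    have hQ : (0:ℝ) < (1 - p) ^ l * (1 - p - ε) ^ (1 - l) :=
      mul_pos (Real.rpow_pos_of_pos h1p l) (Real.rpow_pos_of_pos h1q (1 - l))
    -- rewrite stationarity
    have hstat' : (lb - la) * (p ^ l * (p + ε) ^ (1 - l))
        = (lc - ld) * ((1 - p) ^ l * (1 - p - ε) ^ (1 - l)) := by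
      rw [Real.log_div (ne_of_gt hp) (ne_of_gt hq0),
          Real.log_div (ne_of_gt h1q) (ne_of_gt h1p)] at hstat
      rw [← hla, ← hlb, ← hlc, ← hld] at hstat
      linear_combination -hstat
    -- take logs of stationarity
    have heq : Real.log (lb - la) + (l * la + (1 - l) * lb)
        = Real.log (lc - ld) + (l * lc + (1 - l) * ld) := by
      have := congrArg Real.log hstat'
      rw [Real.log_mul (ne_of_gt hA) (ne_of_gt hP),
          Real.log_mul (ne_of_gt hB) (ne_of_gt hQ),
          Real.log_mul (ne_of_gt (Real.rpow_pos_of_pos hp l))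
            (ne_of_gt (Real.rpow_pos_of_pos hq0 (1 - l))),
          Real.log_mul (ne_of_gt (Real.rpow_pos_of_pos h1p l))
            (ne_of_gt (Real.rpow_pos_of_pos h1q (1 - l))),
          Real.log_rpow hp, Real.log_rpow hq0, Real.log_rpow h1p, Real.log_rpow h1q] at this
      rw [← hla, ← hlb, ← hlc, ← hld] at this
      linarith [this]
    -- the key inequality
    have hkey : p * (p + ε) * (lb - la)^2 ≤ (1 - p - ε) * (1 - p) * (lc - ld)^2 := by
      have := aux_mono ε hε0 hp hple
      rw [show (1 - p - ε) + ε = 1 - p by ring] at this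
      rw [← hla, ← hlb, ← hlc, ← hld] at this
      exact this
    -- take logs of the key inequality
    have hlog : la + lb + 2 * Real.log (lb - la) ≤ ld + lc + 2 * Real.log (lc - ld) := by
      have h1 : (0:ℝ) < p * (p + ε) * (lb - la)^2 := by positivity
      have := Real.log_le_log h1 hkey
      rw [Real.log_mul (by positivity) (by positivity),
          Real.log_mul (ne_of_gt hp) (ne_of_gt hq0),
          Real.log_mul (by positivity) (by positivity),
          Real.log_mul (ne_of_gt h1q) (ne_of_gt h1p),
          Real.log_pow, Real.log_pow] at this
      rw [← hla, ← hlb, ← hlc, ← hld] at this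
      push_cast at this
      linarith [this]
    -- conclude
    have hsum : (2*l - 1) * ((lb - la) + (lc - ld)) ≤ 0 := by linarith [heq, hlog]
    by_contra hl
    push_neg at hl
    have h1 : (0:ℝ) < 2*l - 1 := by linarith
    have h2 : (0:ℝ) < (lb - la) + (lc - ld) := by linarith
    linarith [hsum, mul_pos h1 h2]
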